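/- Every word over X has a Σ-irreducible descendant (a standard form): the rewriting system Σ is normalizing, i.e., for every word w there exists a word r irreducible with respect to Σ such that w rewrites to r in finitely many steps. -/

import Mathlib

abbrev Letter := ℕ × Bool
abbrev Word := List Letter

def pos (i : ℕ) : Letter := (i, true)
def neg (i : ℕ) : Letter := (i, false)

/-- The rewriting rules of the system Σ. -/
inductive SigmaRule : Word → Word → Prop
  | cancel (i : ℕ) : SigmaRule [neg i, pos i] [pos i, neg i]
  | negPos (i j : ℕ) (h : i < j) : SigmaRule [neg i, pos j] [pos (j+1), neg i]
  | posNegInv (i j : ℕ) (h : i < j) : SigmaRule [neg j, pos i] [pos i, neg (j+1)]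
  | posPos (i j : ℕ) (h : i < j) : SigmaRule [pos j, pos i] [pos i, pos (j+1)]
  | negNeg (i j : ℕ) (h : i < j) : SigmaRule [neg i, neg j] [neg (j+1), neg i]

/-- One rewriting step: replace an occurrence of a left-hand side by the right-hand side. -/
def Step (u v : Word) : Prop :=
  ∃ a b l r : Word, SigmaRule l r ∧ u = a ++ l ++ b ∧ v = a ++ r ++ b

/-- A word is Σ-irreducible if no rule applies. -/
def SigmaIrreducible (w : Word) : Prop := ∀ v, ¬ Step w v

/-- Maximal subscript occurring in a positive word (0 for the empty word). -/
def mu (l : List ℕ) : ℕ := l.foldr max 0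

/-- `Ok a b` says no rule applies to the pair `[a, b]`. -/
def Ok : Letter → Letter → Prop := fun a b =>
  match a, b with
  | (i, true), (j, true) => i ≤ j
  | (_, true), (_, false) => True
  | (_, false), (_, true) => False
  | (i, false), (j, false) => j ≤ i

lemma ok_no_rule {a b : Letter} (h : Ok a b) : ∀ r, ¬ SigmaRule [a, b] r := by
  intro r hr
  cases hr <;> simp_all [Ok, pos, neg] <;> omega

lemma chain'_middle : ∀ (a : Word) {x y : Letter} {b : Word},
    List.Chain' Ok (a ++ x :: y :: b) → Ok x y
  | [], _, _, _, h => (List.isChain_cons_cons.mp h).1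
  | _ :: a, _, _, _, h => chain'_middle a h.tail

lemma chain'_irreducible {w : Word} (h : List.Chain' Ok w) : SigmaIrreducible w := by
  rintro v ⟨a, b, l, r, hr, hu, hv⟩
  have hl : ∃ x y : Letter, l = [x, y] := by cases hr <;> exact ⟨_, _, rfl⟩
  obtain ⟨x, y, rfl⟩ := hl
  subst hu
  have : List.Chain' Ok (a ++ x :: y :: b) := by simpa using h
  exact ok_no_rule (chain'_middle a this) r hr

/-- Insert a letter in front of a word, pushing it through by rewriting. -/
def ins : Letter → Word → Word
  | a, [] => [a]
  | (i, true), (j, true) :: t =>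
      if j < i then (j, true) :: ins (i+1, true) t else (i, true) :: (j, true) :: t
  | (i, true), (j, false) :: t => (i, true) :: (j, false) :: t
  | (i, false), (j, true) :: t =>
      if i = j then (j, true) :: ins (i, false) t
      else if i < j then (j+1, true) :: ins (i, false) t
      else (j, true) :: ins (i+1, false) t
  | (i, false), (j, false) :: t =>
      if i < j then (j+1, false) :: ins (i, false) t
      else (i, false) :: (j, false) :: t

lemma step_cons (x : Letter) {u v : Word} (h : Step u v) : Step (x :: u) (x :: v) := by
  obtain ⟨a, b, l, r, hr, hu, hv⟩ := h
  exact ⟨x :: a, b, l, r, hr, by simp [hu], by simp [hv]⟩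

lemma rtg_cons (x : Letter) {u v : Word} (h : Relation.ReflTransGen Step u v) :
    Relation.ReflTransGen Step (x :: u) (x :: v) :=
  Relation.ReflTransGen.lift (x :: ·) (fun _ _ h => step_cons x h) _ _ h

lemma step_head {a b c d : Letter} (h : SigmaRule [a, b] [c, d]) (t : Word) :
    Step (a :: b :: t) (c :: d :: t) :=
  ⟨[], t, [a, b], [c, d], h, rfl, rfl⟩

lemma ins_steps : ∀ (v : Word) (a : Letter), Relation.ReflTransGen Step (a :: v) (ins a v)
  | [], a => by simp only [ins]; exact .refl
  | (j, s) :: t, (i, b) => by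
    cases b <;> cases s
    · -- a = neg i, head = neg j
      by_cases h : i < j
      · simp only [ins, if_pos h]
        exact .head (step_head (.negNeg i j h) t) (rtg_cons _ (ins_steps t (i, false)))
      · simp only [ins, if_neg h]; exact .refl
    · -- a = neg i, head = pos j
      by_cases h1 : i = j
      · subst h1
        simp only [ins, if_pos rfl]
        exact .head (step_head (.cancel i) t) (rtg_cons _ (ins_steps t (i, false)))
      · by_cases h2 : i < j
        · simp only [ins, if_neg h1, if_pos h2]
          exact .head (step_head (.negPos i j h2) t) (rtg_cons _ (ins_steps t (i, false)))
        · simp only [ins, if_neg h1, if_neg h2]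
          have h3 : j < i := by omega
          exact .head (step_head (.posNegInv j i h3) t) (rtg_cons _ (ins_steps t (i+1, false)))
    · -- a = pos i, head = neg j
      simp only [ins]; exact .refl
    · -- a = pos i, head = pos j
      by_cases h : j < i
      · simp only [ins, if_pos h]
        exact .head (step_head (.posPos j i h) t) (rtg_cons _ (ins_steps t (i+1, true)))
      · simp only [ins, if_neg h]; exact .refl

/-- Characterization of the head of `ins a v`. -/
lemma ins_head : ∀ (a : Letter) (v : Word),
    (ins a v).head? = some a ∨
    ∃ (j : ℕ) (s : Bool) (t : Word), v = (j, s) :: t ∧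
      (((ins a v).head? = some (j, s) ∧ (a.2 = false → s = true → j ≤ a.1)) ∨
       ((ins a v).head? = some (j+1, s) ∧ a.2 = false ∧ a.1 < j)) := by
  intro a v
  obtain ⟨i, b⟩ := a
  match v with
  | [] => left; cases b <;> simp [ins]
  | (j, s) :: t => ?_
  cases b <;> cases s
  · -- neg i, neg j
    by_cases h : i < j
    · right; exact ⟨j, false, t, rfl, Or.inr (by simp [ins, if_pos h, h])⟩
    · left; simp [ins, if_neg h]
  · -- neg i, pos j
    by_cases h1 : i = j
    · subst h1
      right; exact ⟨i, true, t, rfl, Or.inl (by simp [ins])⟩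
    · by_cases h2 : i < j
      · right; exact ⟨j, true, t, rfl, Or.inr (by simp [ins, if_neg h1, if_pos h2, h2])⟩
      · right
        refine ⟨j, true, t, rfl, Or.inl ?_⟩
        simp only [ins, if_neg h1, if_neg h2]
        exact ⟨by simp, fun _ _ => by omega⟩
  · -- pos i, neg j
    left; simp [ins]
  · -- pos i, pos j
    by_cases h : j < i
    · right; exact ⟨j, true, t, rfl, Or.inl (by simp [ins, if_pos h])⟩
    · left; simp [ins, if_neg h]

lemma ins_chain : ∀ (v : Word) (a : Letter), List.Chain' Ok v → List.Chain' Ok (ins a v)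
  | [], a, _ => by simp only [ins]; exact List.isChain_singleton _
  | (j, s) :: t, (i, b), hch => by
    have hts : List.Chain' Ok t := hch.tail
    have hhd : ∀ y ∈ t.head?, Ok (j, s) y := List.isChain_cons.mp hch |>.1
    -- helper to conclude Chain' Ok (x :: ins c t) given Ok x (head of ins c t)
    have key : ∀ (x c : Letter), (∀ y ∈ (ins c t).head?, Ok x y) →
        List.Chain' Ok (ins c t) → List.Chain' Ok (x :: ins c t) := by
      intro x c h1 h2; exact List.isChain_cons.mpr ⟨h1, h2⟩
    cases b <;> cases s
    · -- neg i, neg j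
      by_cases h : i < j
      · simp only [ins, if_pos h]
        refine key _ _ ?_ (ins_chain t (i, false) hts)
        intro y hy
        rcases ins_head (i, false) t with hc | ⟨k, s', t', ht, hc | hc⟩
        · rw [hc] at hy; cases hy; simp [Ok]; omega
        · subst ht
          rcases hc with ⟨hc, himp⟩
          rw [hc] at hy; cases hy
          have := hhd (k, s') (by simp)
          rcases s' with _ | _
          · simp [Ok] at this ⊢; omega
          · exact absurd this (by simp [Ok])
        · subst ht
          rcases hc with ⟨hc, -, hlt⟩
          rw [hc] at hy; cases hy
          have := hhd (k, s') (by simp)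
          rcases s' with _ | _
          · simp [Ok] at this ⊢; omega
          · exact absurd this (by simp [Ok])
      · simp only [ins, if_neg h]
        exact List.isChain_cons.mpr ⟨fun y hy => by cases hy; simp [Ok]; omega, hch⟩
    · -- neg i, pos j
      by_cases h1 : i = j
      · subst h1
        simp only [ins, if_pos rfl]
        refine key _ _ ?_ (ins_chain t (i, false) hts)
        intro y hy
        rcases ins_head (i, false) t with hc | ⟨k, s', t', ht, hc | hc⟩
        · rw [hc] at hy; cases hy; simp [Ok]
        · subst ht
          rcases hc with ⟨hc, -⟩
          rw [hc] at hy; cases hy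
          exact hhd (k, s') (by simp)
        · subst ht
          rcases hc with ⟨hc, -, hlt⟩
          rw [hc] at hy; cases hy
          have := hhd (k, s') (by simp)
          rcases s' with _ | _
          · simp [Ok]
          · simp [Ok] at this ⊢; omega
      · by_cases h2 : i < j
        · simp only [ins, if_neg h1, if_pos h2]
          refine key _ _ ?_ (ins_chain t (i, false) hts)
          intro y hy
          rcases ins_head (i, false) t with hc | ⟨k, s', t', ht, hc | hc⟩
          · rw [hc] at hy; cases hy; simp [Ok]
          · subst ht
            rcases hc with ⟨hc, himp⟩
            rw [hc] at hy; cases hy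
            have := hhd (k, s') (by simp)
            rcases s' with _ | _
            · simp [Ok]
            · have hik := himp rfl rfl
              simp [Ok] at this ⊢; omega
          · subst ht
            rcases hc with ⟨hc, -, hlt⟩
            rw [hc] at hy; cases hy
            have := hhd (k, s') (by simp)
            rcases s' with _ | _
            · simp [Ok]
            · simp [Ok] at this ⊢; omega
        · simp only [ins, if_neg h1, if_neg h2]
          refine key _ _ ?_ (ins_chain t (i+1, false) hts)
          intro y hy
          rcases ins_head (i+1, false) t with hc | ⟨k, s', t', ht, hc | hc⟩
          · rw [hc] at hy; cases hy; simp [Ok]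
          · subst ht
            rcases hc with ⟨hc, -⟩
            rw [hc] at hy; cases hy
            exact hhd (k, s') (by simp)
          · subst ht
            rcases hc with ⟨hc, -, hlt⟩
            rw [hc] at hy; cases hy
            have := hhd (k, s') (by simp)
            rcases s' with _ | _
            · simp [Ok]
            · simp [Ok] at this ⊢; omega
    · -- pos i, neg j
      simp only [ins]
      exact List.isChain_cons.mpr ⟨fun y hy => by cases hy; simp [Ok], hch⟩
    · -- pos i, pos j
      by_cases h : j < i
      · simp only [ins, if_pos h]
        refine key _ _ ?_ (ins_chain t (i+1, true) hts)
        intro y hy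
        rcases ins_head (i+1, true) t with hc | ⟨k, s', t', ht, hc | hc⟩
        · rw [hc] at hy; cases hy; simp [Ok]; omega
        · subst ht
          rcases hc with ⟨hc, -⟩
          rw [hc] at hy; cases hy
          exact hhd (k, s') (by simp)
        · rcases hc with ⟨-, hb, -⟩; exact absurd hb (by simp)
      · simp only [ins, if_neg h]
        exact List.isChain_cons.mpr ⟨fun y hy => by cases hy; simp [Ok]; omega, hch⟩

def nf : Word → Word
  | [] => []
  | a :: w => ins a (nf w)

lemma nf_steps : ∀ w : Word, Relation.ReflTransGen Step w (nf w)
  | [] => .refl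
  | a :: w => ((rtg_cons a (nf_steps w)).trans (ins_steps (nf w) a) : _)

lemma nf_chain : ∀ w : Word, List.Chain' Ok (nf w)
  | [] => List.isChain_nil
  | a :: w => ins_chain (nf w) a (nf_chain w)

/-- The rewriting system Σ is normalizing: every word has an irreducible descendant. -/
theorem sigma_normalizing (w : Word) :
    ∃ r : Word, Relation.ReflTransGen Step w r ∧ SigmaIrreducible r :=
  ⟨nf w, nf_steps w, chain'_irreducible (nf_chain w)⟩
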